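/- Let α ∈ ℝ and let a, b be nonzero complex numbers. The operator H₀ on ℓ²(ℤ;ℂ²) has no eigenvalues: for every t ∈ ℂ and every u ∈ ℓ²(ℤ;ℂ²), if H₀u = t·u then u = 0. -/

import Mathlib

open Complex Filter Topology

lemma aux_geom (μ : ℂ) (hμ : μ ≠ 0) (z : ℤ → ℂ)
    (hrec : ∀ n : ℤ, z (n + 1) = μ * z n)
    (hz : Tendsto z cofinite (𝓝 0)) : ∀ n, z n = 0 := by
  have key : ∀ n : ℤ, z n = μ ^ n * z 0 := by
    intro n
    induction n using Int.induction_on with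
    | zero => simp
    | succ k ih =>
      rw [hrec k, ih, zpow_add₀ hμ, zpow_one]; ring
    | pred k ih =>
      have h := hrec (-(k : ℤ) - 1)
      have e : (-(k : ℤ) - 1) + 1 = -k := by ring
      rw [e, ih] at h
      have : z (-(k : ℤ) - 1) = μ⁻¹ * (μ ^ (-(k:ℤ)) * z 0) := by
        rw [h, inv_mul_cancel_left₀ hμ]
      rw [this, zpow_sub₀ hμ, zpow_one]; ring
  suffices h0 : z 0 = 0 by intro n; rw [key n, h0, mul_zero]
  by_contra h0
  have hz' : Tendsto z (atBot ⊔ atTop) (𝓝 0) := by rwa [← Int.cofinite_eq]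
  have hpos : (0:ℝ) < ‖z 0‖ := norm_pos_iff.mpr h0
  rcases le_or_gt 1 ‖μ‖ with hμ1 | hμ1
  · have ht : Tendsto z atTop (𝓝 0) := hz'.mono_left le_sup_right
    have hev : ∀ᶠ n in atTop, z n ∈ Metric.ball (0:ℂ) ‖z 0‖ :=
      ht (Metric.ball_mem_nhds 0 hpos)
    obtain ⟨n, hn1, hn2⟩ := (hev.and (eventually_ge_atTop (0:ℤ))).exists
    lift n to ℕ using hn2
    have h1 : (1:ℝ) ≤ ‖μ‖ ^ (n:ℤ) := by
      rw [zpow_natCast]; exact one_le_pow₀ hμ1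
    have : ‖z 0‖ ≤ ‖z (n:ℤ)‖ := by
      rw [key (n:ℤ), norm_mul, norm_zpow]
      nlinarith [norm_nonneg (z 0)]
    rw [Metric.mem_ball, dist_zero_right] at hn1
    linarith
  · have ht : Tendsto z atBot (𝓝 0) := hz'.mono_left le_sup_left
    have hev : ∀ᶠ n in atBot, z n ∈ Metric.ball (0:ℂ) ‖z 0‖ :=
      ht (Metric.ball_mem_nhds 0 hpos)
    obtain ⟨n, hn1, hn2⟩ := (hev.and (eventually_le_atBot (0:ℤ))).exists
    obtain ⟨m, rfl⟩ : ∃ m : ℕ, n = -(m:ℤ) := ⟨(-n).toNat, by omega⟩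
    have hμpos : (0:ℝ) < ‖μ‖ := norm_pos_iff.mpr hμ
    have h1 : (1:ℝ) ≤ ‖μ‖ ^ (-(m:ℤ)) := by
      rw [zpow_neg, zpow_natCast]
      rw [one_le_inv_iff₀]
      exact ⟨pow_pos hμpos m, pow_le_one₀ (norm_nonneg μ) hμ1.le⟩
    have : ‖z 0‖ ≤ ‖z (-(m:ℤ))‖ := by
      rw [key (-(m:ℤ)), norm_mul, norm_zpow]
      nlinarith [norm_nonneg (z 0)]
    rw [Metric.mem_ball, dist_zero_right] at hn1
    linarith

lemma aux_second_order (τ δ : ℂ) (hδ : δ ≠ 0) (s : ℤ → ℂ)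
    (hrec : ∀ n : ℤ, s (n + 2) = τ * s (n + 1) - δ * s n)
    (hs : Tendsto s cofinite (𝓝 0)) : ∀ n, s n = 0 := by
  obtain ⟨w, hw⟩ : ∃ w : ℂ, w ^ 2 = τ ^ 2 - 4 * δ :=
    IsAlgClosed.exists_pow_nat_eq (τ ^ 2 - 4 * δ) zero_lt_two
  set lam := (τ + w) / 2 with hlam_def
  set mu := (τ - w) / 2 with hmu_def
  have hsum : lam + mu = τ := by rw [hlam_def, hmu_def]; ring
  have hprod : lam * mu = δ := by
    rw [hlam_def, hmu_def]; linear_combination (-(1:ℂ)/4) * hw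
  have hlam : lam ≠ 0 := fun h => hδ (by rw [← hprod, h, zero_mul])
  have hmu : mu ≠ 0 := fun h => hδ (by rw [← hprod, h, mul_zero])
  have hshift : Tendsto (fun n : ℤ => s (n + 1)) cofinite (𝓝 0) :=
    hs.comp ((add_left_injective (1:ℤ)).tendsto_cofinite)
  set y : ℤ → ℂ := fun n => s (n + 1) - lam * s n with hy_def
  have hyrec : ∀ n, y (n + 1) = mu * y n := by
    intro n
    have e : (n + 1) + 1 = n + 2 := by ring
    simp only [hy_def, e]
    linear_combination hrec n - s (n + 1) * hsum + s n * hprod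
  have hytend : Tendsto y cofinite (𝓝 0) := by
    simpa using hshift.sub (hs.const_mul lam)
  have hy0 := aux_geom mu hmu y hyrec hytend
  have hrec1 : ∀ n, s (n + 1) = lam * s n := by
    intro n; have h := hy0 n; simp only [hy_def] at h; linear_combination h
  exact aux_geom lam hlam s hrec1 hs

lemma coord_norm_le (x : EuclideanSpace ℂ (Fin 2)) (i : Fin 2) : ‖x i‖ ≤ ‖x‖ := by
  rw [EuclideanSpace.norm_eq]
  have h1 : ‖x i‖ = Real.sqrt (‖x i‖ ^ 2) := (Real.sqrt_sq (norm_nonneg _)).symm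
  rw [h1]
  apply Real.sqrt_le_sqrt
  exact Finset.single_le_sum (f := fun j => ‖x j‖ ^ 2)
    (fun j _ => by positivity) (Finset.mem_univ i)

/-- The free first-order finite difference operator `H₀` on `ℓ²(ℤ; ℂ²)`
has no eigenvalues: if `H₀ u = t • u` then `u = 0`. -/
theorem H0_no_eigenvalues (α : ℝ) (a b : ℂ) (ha : a ≠ 0) (hb : b ≠ 0)
    (H₀ : lp (fun _ : ℤ => EuclideanSpace ℂ (Fin 2)) 2 →L[ℂ]
          lp (fun _ : ℤ => EuclideanSpace ℂ (Fin 2)) 2)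
    (hH₀ : ∀ (u : lp (fun _ : ℤ => EuclideanSpace ℂ (Fin 2)) 2) (n : ℤ),
      H₀ u n 0 = (α : ℂ) * u n 0 + (starRingEnd ℂ) a * u n 1
          + (starRingEnd ℂ) b * u (n + 1) 1 ∧
      H₀ u n 1 = a * u n 0 + b * u (n - 1) 0 - (α : ℂ) * u n 1) :
    ∀ (t : ℂ) (u : lp (fun _ : ℤ => EuclideanSpace ℂ (Fin 2)) 2),
      H₀ u = t • u → u = 0 := by
  intro t u hu
  have hca : (starRingEnd ℂ) a ≠ 0 := by simpa using ha
  have hcb : (starRingEnd ℂ) b ≠ 0 := by simpa using hb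
  have hval : ∀ (n : ℤ) (i : Fin 2), H₀ u n i = t * u n i := by
    intro n i
    rw [hu, lp.coeFn_smul]
    simp
  have E1 : ∀ n : ℤ, t * u n 0 = (α : ℂ) * u n 0 + (starRingEnd ℂ) a * u n 1
      + (starRingEnd ℂ) b * u (n + 1) 1 := fun n => (hval n 0).symm.trans (hH₀ u n).1
  have E2 : ∀ n : ℤ, t * u n 1 = a * u n 0 + b * u (n - 1) 0 - (α : ℂ) * u n 1 :=
    fun n => (hval n 1).symm.trans (hH₀ u n).2
  have R1 : ∀ n : ℤ, (starRingEnd ℂ) b * u (n + 1) 1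
      = (t - α) * u n 0 - (starRingEnd ℂ) a * u n 1 := by
    intro n; linear_combination -(E1 n)
  have R2 : ∀ n : ℤ, a * u (n + 1) 0 = (t + α) * u (n + 1) 1 - b * u n 0 := by
    intro n
    have h := E2 (n + 1)
    simp only [add_sub_cancel_right] at h
    linear_combination -h
  have key0 : ∀ n : ℤ, a * (starRingEnd ℂ) b * u (n + 2) 0
      = ((t ^ 2 - (α:ℂ) ^ 2) - b * (starRingEnd ℂ) b - a * (starRingEnd ℂ) a) * u (n + 1) 0
        - ((starRingEnd ℂ) a * b) * u n 0 := by
    intro n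
    have h2 := R1 (n + 1)
    have h3 := R2 n
    have h4 := R2 (n + 1)
    have e : n + 1 + 1 = n + 2 := by ring
    rw [e] at h2 h4
    linear_combination (starRingEnd ℂ) b * h4 + (t + α) * h2 + (starRingEnd ℂ) a * h3
  have key1 : ∀ n : ℤ, a * (starRingEnd ℂ) b * u (n + 2) 1
      = ((t ^ 2 - (α:ℂ) ^ 2) - b * (starRingEnd ℂ) b - a * (starRingEnd ℂ) a) * u (n + 1) 1
        - ((starRingEnd ℂ) a * b) * u n 1 := by
    intro n
    have h1 := R1 n
    have h2 := R1 (n + 1)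
    have h3 := R2 n
    have e : n + 1 + 1 = n + 2 := by ring
    rw [e] at h2
    linear_combination a * h2 + (t - α) * h3 + b * h1
  have habd : a * (starRingEnd ℂ) b ≠ 0 := mul_ne_zero ha hcb
  set τ : ℂ := ((t ^ 2 - (α:ℂ) ^ 2) - b * (starRingEnd ℂ) b - a * (starRingEnd ℂ) a)
      / (a * (starRingEnd ℂ) b) with hτ
  set δ : ℂ := ((starRingEnd ℂ) a * b) / (a * (starRingEnd ℂ) b) with hδdef
  have hδ : δ ≠ 0 := div_ne_zero (mul_ne_zero hca hb) habd
  -- tendsto facts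
  have hsum : Summable (fun n : ℤ => ‖u n‖ ^ ((2:ENNReal).toReal)) :=
    (lp.memℓp u).summable (by norm_num)
  have h1 : Filter.Tendsto (fun n : ℤ => ‖u n‖ ^ (2:ℝ)) Filter.cofinite (nhds 0) := by
    have := hsum.tendsto_cofinite_zero
    simpa [ENNReal.toReal_ofNat] using this
  have h2 : Filter.Tendsto (fun n : ℤ => ‖u n‖) Filter.cofinite (nhds 0) := by
    have h3 := (Real.continuous_sqrt.tendsto 0).comp h1
    simp only [Function.comp_def, Real.sqrt_zero] at h3
    convert h3 using 2 with n
    rw [show ((2:ℝ)) = ((2:ℕ):ℝ) by norm_num, Real.rpow_natCast,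
      Real.sqrt_sq (norm_nonneg _)]
  have hcoord : ∀ i : Fin 2, Filter.Tendsto (fun n : ℤ => u n i) Filter.cofinite (nhds 0) := by
    intro i
    exact squeeze_zero_norm (fun n => coord_norm_le (u n) i) h2
  have hrec0 : ∀ n : ℤ, u (n + 2) 0 = τ * u (n + 1) 0 - δ * u n 0 := by
    intro n
    have k := key0 n
    rw [hτ, hδdef]
    field_simp
    linear_combination k
  have hrec1 : ∀ n : ℤ, u (n + 2) 1 = τ * u (n + 1) 1 - δ * u n 1 := by
    intro n
    have k := key1 n
    rw [hτ, hδdef]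
    field_simp
    linear_combination k
  have h00 := aux_second_order τ δ hδ (fun n => u n 0) hrec0 (hcoord 0)
  have h11 := aux_second_order τ δ hδ (fun n => u n 1) hrec1 (hcoord 1)
  apply lp.ext
  funext n
  rw [lp.coeFn_zero]
  ext i
  fin_cases i
  · exact h00 n
  · exact h11 n
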